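/- Let G be a graph with maximum degree at most 5 and let c be a partial acyclic 5-colouring of G whose colour classes induce forests. If a vertex u of G has all of its coloured neighbours receiving pairwise distinct colours (u is rainbow), then for every colour α ∈ {1,…,5}, assigning (or reassigning) colour α to u yields again a partial acyclic 5-colouring whose colour classes induce forests. -/

import Mathlib

open SimpleGraph

/-- The spanning restriction of `G` to edges inside `S`. -/
def myRestr {V : Type*} (G : SimpleGraph V) (S : Set V) : SimpleGraph V where
  Adj x y := G.Adj x y ∧ x ∈ S ∧ y ∈ S
  symm := ⟨fun x y h => ⟨h.1.symm, h.2.2, h.2.1⟩⟩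
  loopless := ⟨fun x h => G.loopless.irrefl x h.1⟩

def myHom {V : Type*} (G : SimpleGraph V) (S : Set V) :
    G.induce S →g myRestr G S where
  toFun := Subtype.val
  map_rel' := fun {a b} h => ⟨h, a.2, b.2⟩

def myLift {V : Type*} {G : SimpleGraph V} {S : Set V} :
    ∀ {a b : V} (_ : (myRestr G S).Walk a b) (ha : a ∈ S) (hb : b ∈ S),
      (G.induce S).Walk ⟨a, ha⟩ ⟨b, hb⟩
  | _, _, SimpleGraph.Walk.nil, _, _ => SimpleGraph.Walk.nil
  | _, _, SimpleGraph.Walk.cons h p, ha, hb =>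
      SimpleGraph.Walk.cons (v := ⟨_, h.2.2⟩) (by exact h.1) (myLift p h.2.2 hb)

theorem myLift_map {V : Type*} {G : SimpleGraph V} {S : Set V} :
    ∀ {a b : V} (p : (myRestr G S).Walk a b) (ha : a ∈ S) (hb : b ∈ S),
      (myLift p ha hb).map (myHom G S) = p
  | _, _, SimpleGraph.Walk.nil, _, _ => rfl
  | _, _, SimpleGraph.Walk.cons h p, ha, hb => by
      simp only [myLift, SimpleGraph.Walk.map_cons, SimpleGraph.Walk.cons.injEq]
      exact congrArg (SimpleGraph.Walk.cons h) (myLift_map p h.2.2 hb)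

theorem myRestr_iff {V : Type*} (G : SimpleGraph V) (S : Set V) :
    (G.induce S).IsAcyclic ↔ (myRestr G S).IsAcyclic := by
  constructor
  · intro h v p hp
    cases p with
    | nil => exact hp.not_of_nil
    | cons hadj q =>
      have hv : v ∈ S := hadj.2.1
      have := myLift_map (SimpleGraph.Walk.cons hadj q) hv hv
      rw [← this] at hp
      replace hp := (SimpleGraph.Walk.map_isCycle_iff_of_injective (f := myHom G S) Subtype.val_injective).mp hp
      exact h _ hp
  · intro h v p hp
    exact h _ (hp.map (f := myHom G S) Subtype.val_injective)

/-- Adding at most one pendant edge at `u` to an acyclic graph keeps it acyclic. -/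
theorem myKey {V : Type*} [DecidableEq V] {H H' : SimpleGraph V} {u : V}
    (h1 : ∀ x y, H'.Adj x y → x ≠ u → y ≠ u → H.Adj x y)
    (h2 : ∀ x y, H'.Adj u x → H'.Adj u y → x = y)
    (hH : H.IsAcyclic) : H'.IsAcyclic := by
  intro v p hp
  by_cases hu : u ∈ p.support
  · -- rotate to a cycle at u, then u has two distinct neighbours: contradiction
    have hq := hp.rotate hu
    set q := p.rotate u hu with hqdef
    clear_value q
    cases q with
    | nil => exact hq.not_of_nil
    | cons hadj r =>
      -- hadj : H'.Adj u w, r : Walk w u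
      rename_i w
      cases hrev : r.reverse with
      | nil => exact H'.loopless.irrefl u hadj
      | @cons _ y _ hadj2 r2 =>
        -- hadj2 : H'.Adj u y, and s(u,y) ∈ r.edges
        have hmem : s(u, y) ∈ r.edges := by
          have : s(u, y) ∈ r.reverse.edges := by
            rw [hrev]; simp
          rwa [SimpleGraph.Walk.edges_reverse, List.mem_reverse] at this
        have hwy : w = y := h2 w y hadj hadj2
        rw [SimpleGraph.Walk.cons_isCycle_iff] at hq
        exact hq.2 (hwy ▸ hmem)
  · -- transfer the cycle to H
    have hpe : ∀ e ∈ p.edges, e ∈ H.edgeSet := by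
      intro e he
      induction e using Sym2.ind with
      | _ x y =>
        have hx := SimpleGraph.Walk.fst_mem_support_of_mem_edges p he
        have hy := SimpleGraph.Walk.snd_mem_support_of_mem_edges p he
        exact h1 x y (p.adj_of_mem_edges he) (fun h => hu (h ▸ hx))
          (fun h => hu (h ▸ hy))
    exact hH _ (hp.transfer hpe)

/-- The subgraph of `G` consisting of edges with one endpoint coloured `i`
and the other coloured `j`. -/
def bicol {V α : Type*} (G : SimpleGraph V) (c : V → α) (i j : α) : SimpleGraph V where
  Adj u w := G.Adj u w ∧ ((c u = i ∧ c w = j) ∨ (c u = j ∧ c w = i))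
  symm := ⟨fun u w h => ⟨h.1.symm, h.2.symm.imp And.symm And.symm⟩⟩
  loopless := ⟨fun u h => G.loopless.irrefl u h.1⟩

/-- A partial acyclic 5-colouring whose colour classes induce forests. -/
def pGood {V : Type*} (G : SimpleGraph V) (c : V → Option (Fin 5)) : Prop :=
  (∀ i : Fin 5, (G.induce {x | c x = some i}).IsAcyclic) ∧
  (∀ i j : Fin 5, i ≠ j →
    (bicol G c (some i) (some j)).IsAcyclic)

/-- A rainbow vertex may be coloured or recoloured with any of the 5 colours. -/
theorem stmt5 {V : Type*} [DecidableEq V] (G : SimpleGraph V)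
    (hΔ : ∀ w : V, (G.neighborSet w).ncard ≤ 5)
    (c : V → Option (Fin 5)) (hc : pGood G c) (u : V)
    (hrb : ∀ u₁ u₂ : V, G.Adj u u₁ → G.Adj u u₂ → (c u₁).isSome →
      c u₁ = c u₂ → u₁ = u₂)
    (α : Fin 5) :
    pGood G (Function.update c u (some α)) := by
  set c' := Function.update c u (some α) with hc'
  have hne : ∀ x : V, x ≠ u → c' x = c x := fun x hx => Function.update_of_ne hx _ _
  constructor
  · intro i
    rw [myRestr_iff]
    apply myKey (H := myRestr G {x | c x = some i}) (u := u)
    · rintro x y ⟨hadj, hx, hy⟩ hxu hyu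
      exact ⟨hadj, by rwa [Set.mem_setOf_eq, hne x hxu] at hx,
        by rwa [Set.mem_setOf_eq, hne y hyu] at hy⟩
    · rintro x y ⟨hax, _, hx⟩ ⟨hay, _, hy⟩
      have hxu : x ≠ u := fun h => G.loopless.irrefl u (h ▸ hax)
      have hyu : y ≠ u := fun h => G.loopless.irrefl u (h ▸ hay)
      rw [Set.mem_setOf_eq, hne x hxu] at hx
      rw [Set.mem_setOf_eq, hne y hyu] at hy
      exact hrb x y hax hay (by simp [hx]) (hx.trans hy.symm)
    · rw [← myRestr_iff]
      exact hc.1 i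
  · intro i j hij
    apply myKey (H := bicol G c (some i) (some j)) (u := u)
    · rintro x y ⟨hadj, hcol⟩ hxu hyu
      rw [hne x hxu, hne y hyu] at hcol
      exact ⟨hadj, hcol⟩
    · rintro x y ⟨hax, hcx⟩ ⟨hay, hcy⟩
      have hxu : x ≠ u := fun h => G.loopless.irrefl u (h ▸ hax)
      have hyu : y ≠ u := fun h => G.loopless.irrefl u (h ▸ hay)
      rw [hne x hxu] at hcx
      rw [hne y hyu] at hcy
      have hcu : c' u = some α := Function.update_self _ _ _
      rcases hcx with ⟨hui, hx⟩ | ⟨huj, hx⟩ <;>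
        rcases hcy with ⟨hui', hy⟩ | ⟨huj', hy⟩
      · exact hrb x y hax hay (by simp [hx]) (hx.trans hy.symm)
      · exact absurd (Option.some.inj ((hui.symm.trans huj'))) hij
      · exact absurd (Option.some.inj ((hui'.symm.trans huj))) hij
      · exact hrb x y hax hay (by simp [hx]) (hx.trans hy.symm)
    · exact hc.2 i j hij
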